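/- Suppose F = f + Ψ where f : ℝⁿ → ℝ is L-smooth (L > 0, f not necessarily convex) and Ψ : ℝⁿ → ℝ ∪ {+∞} is proper, closed and convex, and let F* = inf_x F(x) > −∞. Let x₀ = z₀ ∈ ℝⁿ, let M₁ be an affine subspace containing x₀ + span{G_{1/L}(x₀)}, and suppose {M_k}_{k≥1}, {x_k}, {y_k}, {z_k} satisfy: for each k ≥ 1, x_k minimizes F over M_k; z_k ∈ M_k; and M_{k+1} contains z_k + span{G_{1/L}(z_k)} and x_k + span{G_{1/L}(x_k)}. Then for all k ≥ 0, min_{j=0,…,k} ‖G_{1/L}(x_j)‖ ≤ √(2L(F(x₀) − F*)/(k+1)). -/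

import Mathlib

open scoped RealInnerProductSpace

-- pure real limit argument
lemma limit_aux (a b d : ℝ) (hd : 0 ≤ d)
    (key : ∀ l : ℝ, 0 < l → l ≤ 1 → l*a + l*(1-l)*d ≤ l*b) : a + d ≤ b := by
  have key2 : ∀ l : ℝ, 0 < l → l ≤ 1 → a + d ≤ b + l*d := by
    intro l h0 h1
    have hk := key l h0 h1
    nlinarith [hk, h0, mul_pos h0 h0]
  rcases eq_or_lt_of_le hd with hd0 | hd0
  · have := key2 1 one_pos le_rfl
    nlinarith
  · by_contra hcon
    push_neg at hcon
    set ε := a + d - b with hε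
    have hε0 : 0 < ε := by rw [hε]; linarith
    set l := min 1 (ε/(2*d)) with hl
    have hl0 : 0 < l := lt_min one_pos (by positivity)
    have hl1 : l ≤ 1 := min_le_left _ _
    have hl2 : l ≤ ε/(2*d) := min_le_right _ _
    have hk := key2 l hl0 hl1
    have hld : l * d ≤ ε/2 := by
      have h1 : l * d ≤ (ε/(2*d)) * d := mul_le_mul_of_nonneg_right hl2 hd
      have h2 : (ε/(2*d)) * d = ε/2 := by field_simp
      linarith
    linarith

-- strong prox inequality, real form


lemma strong_prox_aux {n : ℕ} (Ψ : EuclideanSpace ℝ (Fin n) → EReal)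
    (hconvex : ∀ x y : EuclideanSpace ℝ (Fin n), ∀ a b : ℝ, 0 ≤ a → 0 ≤ b → a + b = 1 →
      Ψ (a • x + b • y) ≤ (a : EReal) * Ψ x + (b : EReal) * Ψ y)
    (prox : ℝ → EuclideanSpace ℝ (Fin n) → EuclideanSpace ℝ (Fin n))
    (hprox : ∀ t : ℝ, 0 < t → ∀ x z : EuclideanSpace ℝ (Fin n),
      Ψ (prox t x) + ((‖x - prox t x‖ ^ 2 / (2 * t) : ℝ) : EReal)
        ≤ Ψ z + ((‖x - z‖ ^ 2 / (2 * t) : ℝ) : EReal))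
    (t : ℝ) (ht : 0 < t) (x z : EuclideanSpace ℝ (Fin n)) (ψp ψz : ℝ)
    (hp : Ψ (prox t x) = (ψp : EReal)) (hz : Ψ z = (ψz : EReal)) :
    ψp + ‖x - prox t x‖ ^ 2 / (2*t) + ‖z - prox t x‖ ^ 2 / (2*t)
      ≤ ψz + ‖x - z‖ ^ 2 / (2*t) := by
  set p := prox t x with hpdef
  set P := ‖x - p‖ ^ 2 with hP
  set Q := ‖x - z‖ ^ 2 with hQ
  set D := ‖z - p‖ ^ 2 with hD
  have hD0 : 0 ≤ D := sq_nonneg _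
  -- key per-λ inequality
  have key : ∀ l : ℝ, 0 < l → l ≤ 1 →
      l*(ψp + P/(2*t)) + l*(1-l)*(D/(2*t)) ≤ l*(ψz + Q/(2*t)) := by
    intro l hl0' hl1
    have hl0 : (0:ℝ) ≤ l := hl0'.le
    have hcomb := hconvex p z (1-l) l (by linarith) hl0 (by ring)
    rw [hp, hz] at hcomb
    have hcomb' : Ψ ((1-l) • p + l • z) ≤ (((1-l)*ψp + l*ψz : ℝ) : EReal) := by
      calc Ψ ((1-l) • p + l • z) ≤ ((1-l) : EReal) * (ψp:EReal) + (l:EReal) * (ψz:EReal) := hcomb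
      _ = (((1-l)*ψp + l*ψz : ℝ) : EReal) := by
          rw [EReal.coe_add, EReal.coe_mul, EReal.coe_mul]
          norm_cast
    have hx := hprox t ht x ((1-l) • p + l • z)
    rw [hp] at hx
    have hnorm : ‖x - ((1-l) • p + l • z)‖ ^ 2 = (1-l)*P + l*Q - l*(1-l)*D := by
      have hvec : x - ((1-l) • p + l • z) = (1-l) • (x - p) + l • (x - z) := by
        have h1 : (1-l) • (x - p) + l • (x - z) = ((1-l)+l) • x - ((1-l) • p + l • z) := by
          rw [smul_sub, smul_sub, add_smul]; abel
        rw [h1]; norm_num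
      rw [hvec, norm_add_sq_real, norm_smul, norm_smul, real_inner_smul_left,
        real_inner_smul_right]
      have hsub : (x - p) - (x - z) = z - p := by abel
      have hD' : D = ‖x-p‖^2 - 2*⟪x-p, x-z⟫ + ‖x-z‖^2 := by
        rw [hD, ← hsub, norm_sub_sq_real]
      simp only [Real.norm_eq_abs, mul_pow, sq_abs]
      rw [hP, hQ] at *
      nlinarith [hD']
    have hchain : ((ψp + P/(2*t) : ℝ) : EReal)
        ≤ (((1-l)*ψp + l*ψz + ((1-l)*P + l*Q - l*(1-l)*D)/(2*t) : ℝ) : EReal) := by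
      calc ((ψp + P/(2*t) : ℝ) : EReal) = (ψp : EReal) + ((P/(2*t) : ℝ) : EReal) := by
            rw [EReal.coe_add]
        _ ≤ Ψ ((1-l) • p + l • z) + ((‖x - ((1-l) • p + l • z)‖^2/(2*t) : ℝ) : EReal) := hx
        _ ≤ (((1-l)*ψp + l*ψz : ℝ) : EReal) + ((‖x - ((1-l) • p + l • z)‖^2/(2*t) : ℝ) : EReal) :=
            add_le_add_left hcomb' _
        _ = _ := by rw [hnorm, ← EReal.coe_add]
    have hreal := EReal.coe_le_coe_iff.mp hchain
    have hsplit : ((1-l)*P + l*Q - l*(1-l)*D)/(2*t)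
        = (1-l)*(P/(2*t)) + l*(Q/(2*t)) - l*(1-l)*(D/(2*t)) := by ring
    rw [hsplit] at hreal
    nlinarith [hreal]
  have hfinal := limit_aux (ψp + P/(2*t)) (ψz + Q/(2*t)) (D/(2*t)) (by positivity) key
  linarith

-- sufficient decrease lemma
lemma descent_aux {n : ℕ} (L : ℝ) (hL : 0 < L)
    (f : EuclideanSpace ℝ (Fin n) → ℝ)
    (f' : EuclideanSpace ℝ (Fin n) → EuclideanSpace ℝ (Fin n))
    (hsmooth : ∀ x y : EuclideanSpace ℝ (Fin n),
      |f x - f y - ⟪f' y, x - y⟫| ≤ L / 2 * ‖x - y‖ ^ 2)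
    (Ψ : EuclideanSpace ℝ (Fin n) → EReal)
    (hproper : (∀ x, Ψ x ≠ ⊥) ∧ (∃ x, Ψ x ≠ ⊤))
    (hconvex : ∀ x y : EuclideanSpace ℝ (Fin n), ∀ a b : ℝ, 0 ≤ a → 0 ≤ b → a + b = 1 →
      Ψ (a • x + b • y) ≤ (a : EReal) * Ψ x + (b : EReal) * Ψ y)
    (prox : ℝ → EuclideanSpace ℝ (Fin n) → EuclideanSpace ℝ (Fin n))
    (hprox : ∀ t : ℝ, 0 < t → ∀ x z : EuclideanSpace ℝ (Fin n),
      Ψ (prox t x) + ((‖x - prox t x‖ ^ 2 / (2 * t) : ℝ) : EReal)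
        ≤ Ψ z + ((‖x - z‖ ^ 2 / (2 * t) : ℝ) : EReal))
    (u : EuclideanSpace ℝ (Fin n)) (ψu : ℝ) (hu : Ψ u = (ψu : EReal)) :
    ∃ ψp : ℝ, Ψ (prox (1/L) (u - (1/L) • f' u)) = (ψp : EReal) ∧
      f (prox (1/L) (u - (1/L) • f' u)) + ψp
        + (L/2) * ‖u - prox (1/L) (u - (1/L) • f' u)‖ ^ 2 ≤ f u + ψu := by
  have ht : (0:ℝ) < 1/L := by positivity
  set xx := u - (1/L) • f' u with hxx
  set p := prox (1/L) xx with hpdef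
  -- Ψ p is a real number
  have hne_bot : Ψ p ≠ ⊥ := hproper.1 _
  have hne_top : Ψ p ≠ ⊤ := by
    intro htop
    have h1 := hprox (1/L) ht xx u
    rw [htop, EReal.top_add_coe, hu, ← EReal.coe_add] at h1
    rw [top_le_iff] at h1
    exact EReal.coe_ne_top _ h1
  obtain ⟨ψp, hψp⟩ : ∃ r : ℝ, Ψ p = (r : EReal) :=
    ⟨(Ψ p).toReal, (EReal.coe_toReal hne_top hne_bot).symm⟩
  refine ⟨ψp, hψp, ?_⟩
  have hstrong := strong_prox_aux Ψ hconvex prox hprox (1/L) ht xx u ψp ψu hψp hu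
  -- expand the norms
  have e1 : ‖xx - u‖ ^ 2 = (1/L)^2 * ‖f' u‖^2 := by
    rw [hxx]
    have : u - (1/L) • f' u - u = -((1/L) • f' u) := by abel
    rw [this, norm_neg, norm_smul, mul_pow, Real.norm_eq_abs, sq_abs]
  have e2 : ‖xx - p‖ ^ 2 = ‖u - p‖^2 - 2*(1/L)*⟪u - p, f' u⟫ + (1/L)^2*‖f' u‖^2 := by
    have hv : xx - p = (u - p) - (1/L) • f' u := by rw [hxx]; abel
    rw [hv, norm_sub_sq_real, real_inner_smul_right, norm_smul, Real.norm_eq_abs,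
      mul_pow, sq_abs]
    ring
  rw [e1, e2] at hstrong
  -- smoothness bound
  have hs := hsmooth p u
  rw [abs_le] at hs
  have hs1 : f p ≤ f u + ⟪f' u, p - u⟫ + L/2 * ‖p - u‖^2 := by linarith [hs.2]
  have hinner : ⟪f' u, p - u⟫ = -⟪u - p, f' u⟫ := by
    rw [real_inner_comm]
    have : p - u = -(u - p) := by abel
    rw [this, inner_neg_left]
  have hnrev : ‖p - u‖ = ‖u - p‖ := norm_sub_rev _ _
  rw [hinner, hnrev] at hs1
  -- combine; all divisions are by 1/L
  have hLt : (1/L) * L = 1 := by field_simp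
  have hdiv : ∀ X : ℝ, X / (2 * (1/L)) = L * X / 2 := by
    intro X; field_simp
  rw [hdiv, hdiv, hdiv] at hstrong
  nlinarith [hstrong, hs1, sq_nonneg ‖u - p‖, hL]

/-- for the idealized framework applied to a (possibly
nonconvex) `L`-smooth `f`, the smallest prox-gradient norm among the first
`k+1` iterates is at most `√(2L(F(x₀) − F*)/(k+1))`. -/
theorem idealized_algorithm_nonconvex_rate {n : ℕ} (L : ℝ) (hL : 0 < L)
    (f : EuclideanSpace ℝ (Fin n) → ℝ)
    (f' : EuclideanSpace ℝ (Fin n) → EuclideanSpace ℝ (Fin n))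
    (hdiff : ∀ x, HasGradientAt f (f' x) x)
    (hsmooth : ∀ x y : EuclideanSpace ℝ (Fin n),
      |f x - f y - ⟪f' y, x - y⟫| ≤ L / 2 * ‖x - y‖ ^ 2)
    (Ψ : EuclideanSpace ℝ (Fin n) → EReal)
    (hproper : (∀ x, Ψ x ≠ ⊥) ∧ (∃ x, Ψ x ≠ ⊤))
    (hclosed : LowerSemicontinuous Ψ)
    (hconvex : ∀ x y : EuclideanSpace ℝ (Fin n), ∀ a b : ℝ, 0 ≤ a → 0 ≤ b → a + b = 1 →
      Ψ (a • x + b • y) ≤ (a : EReal) * Ψ x + (b : EReal) * Ψ y)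
    (prox : ℝ → EuclideanSpace ℝ (Fin n) → EuclideanSpace ℝ (Fin n))
    (hprox : ∀ t : ℝ, 0 < t → ∀ x z : EuclideanSpace ℝ (Fin n),
      Ψ (prox t x) + ((‖x - prox t x‖ ^ 2 / (2 * t) : ℝ) : EReal)
        ≤ Ψ z + ((‖x - z‖ ^ 2 / (2 * t) : ℝ) : EReal))
    (F : EuclideanSpace ℝ (Fin n) → EReal)
    (hF : ∀ x, F x = (f x : EReal) + Ψ x)
    (G : ℝ → EuclideanSpace ℝ (Fin n) → EuclideanSpace ℝ (Fin n))
    (hG : ∀ t x, G t x = t⁻¹ • (x - prox t (x - t • f' x)))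
    -- `F* = inf F > −∞`, expressed by requiring the infimum to be the real `Fstar`
    (Fstar : ℝ) (hFstar : ((Fstar : ℝ) : EReal) = ⨅ w, F w)
    (M : ℕ → AffineSubspace ℝ (EuclideanSpace ℝ (Fin n)))
    (x z : ℕ → EuclideanSpace ℝ (Fin n))
    -- the starting value `F(x₀)` is the real number `F0`
    (F0 : ℝ) (hF0 : F (x 0) = ((F0 : ℝ) : EReal))
    (hx0z0 : x 0 = z 0)
    (hM1 : ∀ c : ℝ, x 0 + c • G (1 / L) (x 0) ∈ M 1)
    (hx : ∀ k, 1 ≤ k → x k ∈ M k ∧ ∀ w ∈ M k, F (x k) ≤ F w)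
    (hzmem : ∀ k, 1 ≤ k → z k ∈ M k)
    (hM : ∀ k, 1 ≤ k → ∀ c : ℝ,
      z k + c • G (1 / L) (z k) ∈ M (k + 1) ∧
      x k + c • G (1 / L) (x k) ∈ M (k + 1)) :
    ∀ k : ℕ, ∃ j ≤ k,
      ‖G (1 / L) (x j)‖ ≤ Real.sqrt (2 * L * (F0 - Fstar) / ((k : ℝ) + 1)) := by
  have hFlow : ∀ w, ((Fstar : ℝ) : EReal) ≤ F w := fun w => hFstar ▸ iInf_le _ w
  -- the prox step as a point of the search line
  have hstep : ∀ u, u + (-(1/L)) • G (1/L) u = prox (1/L) (u - (1/L) • f' u) := by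
    intro u
    rw [hG, smul_smul]
    have h1 : (-(1/L)) * (1/L)⁻¹ = -1 := by field_simp
    rw [h1, neg_one_smul]
    abel
  have hGnorm : ∀ u, ‖G (1/L) u‖^2
      = L^2 * ‖u - prox (1/L) (u - (1/L) • f' u)‖^2 := by
    intro u
    rw [hG, norm_smul, mul_pow, Real.norm_eq_abs, sq_abs]
    congr 1
    rw [one_div, inv_inv]
  -- main induction
  have main : ∀ k : ℕ, ∃ r : ℝ, F (x k) = (r : EReal) ∧ Fstar ≤ r ∧
      r + (∑ i ∈ Finset.range k, ‖G (1/L) (x i)‖^2) / (2*L) ≤ F0 := by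
    intro k
    induction k with
    | zero =>
      refine ⟨F0, hF0, ?_, by simp⟩
      have := hFlow (x 0)
      rw [hF0] at this
      exact EReal.coe_le_coe_iff.mp this
    | succ k ih =>
      obtain ⟨r, hr, hrl, hrs⟩ := ih
      -- Ψ (x k) is real
      have hne_bot : Ψ (x k) ≠ ⊥ := hproper.1 _
      have hne_top : Ψ (x k) ≠ ⊤ := by
        intro htop
        rw [hF (x k), htop, EReal.coe_add_top] at hr
        exact EReal.coe_ne_top r hr.symm
      obtain ⟨s, hs⟩ : ∃ s : ℝ, Ψ (x k) = (s : EReal) :=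
        ⟨(Ψ (x k)).toReal, (EReal.coe_toReal hne_top hne_bot).symm⟩
      have hfs : f (x k) + s = r := by
        have := hr
        rw [hF (x k), hs, ← EReal.coe_add] at this
        exact EReal.coe_eq_coe_iff.mp this
      obtain ⟨ψp, hψp, hdec⟩ := descent_aux L hL f f' hsmooth Ψ hproper hconvex
        prox hprox (x k) s hs
      set p := prox (1/L) (x k - (1/L) • f' (x k)) with hp
      have hFp : F p = ((f p + ψp : ℝ) : EReal) := by
        rw [hF p, hψp, EReal.coe_add]
      -- p belongs to M (k+1)
      have hmem : p ∈ M (k+1) := by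
        rcases Nat.eq_zero_or_pos k with hk0 | hk1
        · subst hk0
          have := hM1 (-(1/L))
          rwa [hstep (x 0)] at this
        · have := (hM k hk1 (-(1/L))).2
          rwa [hstep (x k)] at this
      have hle : F (x (k+1)) ≤ ((f p + ψp : ℝ) : EReal) := by
        rw [← hFp]
        exact (hx (k+1) (by omega)).2 p hmem
      -- F (x (k+1)) is real
      have hxne_bot : F (x (k+1)) ≠ ⊥ := fun h => by
        have := hFlow (x (k+1)); rw [h] at this; simp at this
      have hxne_top : F (x (k+1)) ≠ ⊤ := fun h => by
        rw [h, top_le_iff] at hle; exact EReal.coe_ne_top _ hle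
      obtain ⟨r', hr'⟩ : ∃ r' : ℝ, F (x (k+1)) = (r' : EReal) :=
        ⟨(F (x (k+1))).toReal, (EReal.coe_toReal hxne_top hxne_bot).symm⟩
      refine ⟨r', hr', ?_, ?_⟩
      · have := hFlow (x (k+1)); rw [hr'] at this
        exact EReal.coe_le_coe_iff.mp this
      · have hle' : r' ≤ f p + ψp := by
          rw [hr'] at hle; exact EReal.coe_le_coe_iff.mp hle
        have hd2 : ‖G (1/L) (x k)‖^2 / (2*L) = (L/2) * ‖x k - p‖^2 := by
          rw [hGnorm (x k), ← hp]
          field_simp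
        rw [Finset.sum_range_succ, add_div, hd2]
        have hsum_div : (∑ i ∈ Finset.range k, ‖G (1/L) (x i)‖^2) / (2*L)
            = (∑ i ∈ Finset.range k, ‖G (1/L) (x i)‖^2) / (2*L) := rfl
        linarith [hdec, hfs, hrs, hle']
  -- conclude
  intro k
  obtain ⟨r, _, hrl, hrs⟩ := main (k+1)
  have hsum : (∑ i ∈ Finset.range (k+1), ‖G (1/L) (x i)‖^2) ≤ 2*L*(F0 - Fstar) := by
    have h2L : (0:ℝ) < 2*L := by linarith
    have : (∑ i ∈ Finset.range (k+1), ‖G (1/L) (x i)‖^2) / (2*L) ≤ F0 - Fstar := by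
      linarith
    calc (∑ i ∈ Finset.range (k+1), ‖G (1/L) (x i)‖^2)
        = ((∑ i ∈ Finset.range (k+1), ‖G (1/L) (x i)‖^2) / (2*L)) * (2*L) := by
          field_simp
      _ ≤ (F0 - Fstar) * (2*L) := mul_le_mul_of_nonneg_right this h2L.le
      _ = 2*L*(F0 - Fstar) := by ring
  obtain ⟨j, hjmem, hjmin⟩ := Finset.exists_min_image (Finset.range (k+1))
    (fun i => ‖G (1/L) (x i)‖) ⟨0, by simp⟩
  have hjk : j ≤ k := by
    have := Finset.mem_range.mp hjmem; omega
  refine ⟨j, hjk, ?_⟩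
  have hcard : ((k:ℝ)+1) * ‖G (1/L) (x j)‖^2
      ≤ ∑ i ∈ Finset.range (k+1), ‖G (1/L) (x i)‖^2 := by
    have hb : ∀ i ∈ Finset.range (k+1), ‖G (1/L) (x j)‖^2 ≤ ‖G (1/L) (x i)‖^2 := by
      intro i hi
      exact pow_le_pow_left₀ (norm_nonneg _) (hjmin i hi) 2
    have := Finset.card_nsmul_le_sum (Finset.range (k+1))
      (fun i => ‖G (1/L) (x i)‖^2) (‖G (1/L) (x j)‖^2) hb
    rwa [Finset.card_range, nsmul_eq_mul, Nat.cast_add, Nat.cast_one] at this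
  have hk1 : (0:ℝ) < (k:ℝ) + 1 := by positivity
  have hgoal2 : ‖G (1/L) (x j)‖^2 ≤ 2*L*(F0 - Fstar) / ((k:ℝ)+1) := by
    rw [le_div_iff₀ hk1]
    nlinarith [hcard, hsum]
  have hynn : 0 ≤ 2*L*(F0 - Fstar) / ((k:ℝ)+1) :=
    le_trans (sq_nonneg _) hgoal2
  exact (Real.le_sqrt (norm_nonneg _) hynn).mpr hgoal2
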